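/- Let (R, m) be a one-dimensional reduced complete local ring, N a finitely generated torsion-free R-module, and N' = Hom_R(R^{(1)}, N) ⊆ N where R^{(1)} = End_R(m) is viewed as a subring of the total quotient ring. Then N' is the largest R^{(1)}-submodule of N: it is an R^{(1)}-module, and for every finitely generated torsion-free R^{(1)}-module X and every R-linear map f : X → N, the image of f is contained in N'. -/
import Mathlib


set_option synthInstance.maxHeartbeats 1000000
set_option maxHeartbeats 1000000

universe u

open IsLocalRing

/-- Torsion-free: nonzerodivisors act injectively (equivalently `M → M ⊗ K` is injective). -/
def TorsionFree (A : Type u) [CommRing A] (M : Type u) [AddCommGroup M] [Module A M] : Prop :=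
  ∀ a ∈ nonZeroDivisors A, ∀ m : M, a • m = 0 → m = 0

/-- For a subring `S` of the total quotient ring `K`, the predicate on `x ∈ N` that all
`S`-multiples of `x` (computed inside `K ⊗_R N`) remain inside `N`.  The set of such `x`
is the image of the natural inclusion `Hom_R(S, N) ⊆ N`. -/
def StableUnder (R : Type u) [CommRing R] (S : Subalgebra R (FractionRing R))
    (N : Type u) [AddCommGroup N] [Module R N] (x : N) : Prop :=
  ∀ s : S, ∃ y : N,
    (s : FractionRing R) • (TensorProduct.mk R (FractionRing R) N 1 x) =
      TensorProduct.mk R (FractionRing R) N 1 y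

/-- Let `(R, m)` be a one-dimensional reduced complete Noetherian local
ring, `N` a finitely generated torsion-free `R`-module, and `S = R⁽¹⁾ = End_R(m)`, viewed
inside the total quotient ring `K` (the subalgebra of all `x` with `x·r = f(r)` for some
endomorphism `f` of `m`, `r` a fixed nonzerodivisor in `m`).  Then
`N' = Hom_R(R⁽¹⁾, N) = {x ∈ N : S·x ⊆ N}` is the largest `R⁽¹⁾`-submodule of `N`: it is an
`S`-stable `R`-submodule, and for every finitely generated torsion-free `S`-module `X` and
every `R`-linear map `f : X → N` the image of `f` lies in `N'`. -/
theorem largest_overring_submodule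
    (R : Type u) [CommRing R] [IsLocalRing R] [IsNoetherianRing R] [IsReduced R]
    (hdim : ringKrullDim R = 1) (hcomp : IsAdicComplete (maximalIdeal R) R)
    (r : R) (hr : r ∈ maximalIdeal R) (hr' : r ∈ nonZeroDivisors R)
    (S : Subalgebra R (FractionRing R))
    (hS : ∀ x : FractionRing R, x ∈ S ↔ ∃ f : Module.End R (maximalIdeal R),
      x * algebraMap R (FractionRing R) r =
        algebraMap R (FractionRing R) ((f ⟨r, hr⟩ : maximalIdeal R) : R))
    (N : Type u) [AddCommGroup N] [Module R N]
    (hN : Module.Finite R N) (hNt : TorsionFree R N) :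
    (∀ x y : N, StableUnder R S N x → StableUnder R S N y → StableUnder R S N (x + y)) ∧
    (∀ (c : R) (x : N), StableUnder R S N x → StableUnder R S N (c • x)) ∧
    (∀ (x y : N) (s : S), StableUnder R S N x →
      (s : FractionRing R) • (TensorProduct.mk R (FractionRing R) N 1 x) =
        TensorProduct.mk R (FractionRing R) N 1 y → StableUnder R S N y) ∧
    (∀ (X : Type u) [AddCommGroup X] [Module R X] [Module S X] [IsScalarTower R S X],
      Module.Finite S X → TorsionFree S X →
      ∀ (f : X →ₗ[R] N) (v : X), StableUnder R S N (f v)) := by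
  classical
  have hunit : IsUnit (algebraMap R (FractionRing R) r) :=
    IsLocalization.map_units (FractionRing R) (⟨r, hr'⟩ : nonZeroDivisors R)
  refine ⟨?_, ?_, ?_, ?_⟩
  · intro x y hx hy s
    obtain ⟨a, ha⟩ := hx s
    obtain ⟨b, hb⟩ := hy s
    exact ⟨a + b, by rw [map_add, smul_add, ha, hb, map_add]⟩
  · intro c x hx s
    obtain ⟨a, ha⟩ := hx s
    refine ⟨c • a, ?_⟩
    rw [map_smul, ← algebraMap_smul (FractionRing R) c
      ((TensorProduct.mk R (FractionRing R) N) 1 x), smul_comm, algebraMap_smul, ha, map_smul]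
  · intro x y s hx heq s'
    obtain ⟨z, hz⟩ := hx (s' * s)
    refine ⟨z, ?_⟩
    rw [← heq, smul_smul, ← hz]
    norm_cast
  · intro X _ _ _ _ _ _ f v s
    obtain ⟨g, hg⟩ := (hS (s : FractionRing R)).mp s.2
    set a : R := ((g ⟨r, hr⟩ : maximalIdeal R) : R) with ha
    have hrs : r • s = algebraMap R S a := by
      apply Subtype.ext
      show r • (s : FractionRing R) = algebraMap R (FractionRing R) a
      rw [Algebra.smul_def, mul_comm, hg]
    have hxv : r • (s • v) = a • v := by
      rw [← smul_assoc, hrs, algebraMap_smul]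
    refine ⟨f (s • v), ?_⟩
    apply hunit.smul_left_cancel.mp
    rw [smul_smul, mul_comm, hg, algebraMap_smul, ← map_smul, algebraMap_smul, ← map_smul,
      ← hxv, ← map_smul, ← map_smul]
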